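/- Let (X,σ) be an indecomposable solution of multipermutational level at most 2 with abelian permutation group. Then all permutations σ_x, x ∈ X, have the same order. -/

import Mathlib

/-- in an indecomposable solution of multipermutational level at most 2
with abelian permutation group, all permutations `σ_x` have the same order. -/
theorem perm_same_order {X : Type*} (σ : X → Equiv.Perm X)
    (hcc : ∀ x y : X, (σ ((σ x)⁻¹ y))⁻¹ * (σ x)⁻¹ = (σ ((σ y)⁻¹ x))⁻¹ * (σ y)⁻¹)
    (hnd : Function.Bijective fun a : X => (σ a)⁻¹ a)
    (hmp2 : ∀ x y z : X, σ (σ y x) = σ (σ z x))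
    (hab : ∀ x y : X, Commute (σ x) (σ y))
    (htr : ∀ x y : X, ∃ g ∈ Subgroup.closure (Set.range σ), g x = y) :
    ∀ x y : X, orderOf (σ x) = orderOf (σ y) := by
  intro x y
  -- Key formula: σ (λ_b a) = (σ b)⁻¹ * σ a * σ (λ_b b), where λ_b = (σ b)⁻¹
  have hC : ∀ b a : X, σ ((σ b)⁻¹ a) = (σ b)⁻¹ * σ a * σ ((σ b)⁻¹ b) := by
    intro b a
    have hB : σ (σ a ((σ b)⁻¹ b)) = σ b := by
      rw [hmp2 _ a b, (show ∀ (f : Equiv.Perm X) (z : X), f (f⁻¹ z) = z from fun f z => by simp)]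
    have h1 := hcc a (σ a ((σ b)⁻¹ b))
    rw [(show ∀ (f : Equiv.Perm X) (z : X), f⁻¹ (f z) = z from fun f z => by simp), hB] at h1
    have h2 := congrArg Inv.inv h1
    simp only [mul_inv_rev, inv_inv] at h2
    -- h2 : σ a * σ ((σ b)⁻¹ b) = σ b * σ ((σ b)⁻¹ a)
    rw [mul_assoc, h2, inv_mul_cancel_left]
  have hD2 : ∀ b a : X, σ (σ b a) = σ b * σ a * (σ ((σ b)⁻¹ b))⁻¹ := by
    intro b a
    have h := hC b (σ b a)
    rw [(show ∀ (f : Equiv.Perm X) (z : X), f⁻¹ (f z) = z from fun f z => by simp)] at h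
    rw [h]
    group
  set d : Equiv.Perm X := σ x * (σ ((σ x)⁻¹ x))⁻¹ with hd
  have hstep : ∀ z w : X, σ (σ z w) = σ w * d := by
    intro z w
    rw [hmp2 w z x, hD2 x w, (hab x w).eq, mul_assoc]
  have hcd : ∀ w : X, Commute (σ w) d :=
    fun w => (hab w x).mul_right ((hab w _).inv_right)
  -- powers of a single generator
  have hpow : ∀ (z : X) (n : ℕ) (w : X), σ (((σ z) ^ n) w) = σ w * d ^ n := by
    intro z n
    induction n with
    | zero => intro w; simp
    | succ n ih =>
      intro w
      rw [pow_succ, Equiv.Perm.mul_apply, ih (σ z w), hstep z w, pow_succ', mul_assoc]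
  have hdord : ∀ w : X, d ^ orderOf (σ w) = 1 := by
    intro w
    have h := hpow w (orderOf (σ w)) w
    rw [pow_orderOf_eq_one (σ w)] at h
    simp only [Equiv.Perm.coe_one, id_eq] at h
    exact (left_eq_mul.mp h)
  -- σ is constant along the orbit up to powers of d
  have hP : ∀ g ∈ Subgroup.closure (Set.range σ), ∀ w : X, ∃ k : ℤ, σ (g w) = σ w * d ^ k := by
    intro g hg
    induction hg using Subgroup.closure_induction with
    | mem g hgmem =>
      obtain ⟨z, rfl⟩ := hgmem
      intro w
      exact ⟨1, by rw [zpow_one]; exact hstep z w⟩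
    | one => intro w; exact ⟨0, by simp⟩
    | mul g₁ g₂ hg₁ hg₂ ih₁ ih₂ =>
      intro w
      obtain ⟨k₂, hk₂⟩ := ih₂ w
      obtain ⟨k₁, hk₁⟩ := ih₁ (g₂ w)
      refine ⟨k₂ + k₁, ?_⟩
      rw [Equiv.Perm.mul_apply, hk₁, hk₂, zpow_add, mul_assoc]
    | inv g hg ih =>
      intro w
      obtain ⟨k, hk⟩ := ih (g⁻¹ w)
      rw [(show ∀ (f : Equiv.Perm X) (z : X), f (f⁻¹ z) = z from fun f z => by simp)] at hk
      refine ⟨-k, ?_⟩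
      rw [hk, mul_assoc, ← zpow_add, add_neg_cancel, zpow_zero, mul_one]
  have key : ∀ (a b : X) (k : ℤ), σ a = σ b * d ^ k → orderOf (σ a) ∣ orderOf (σ b) := by
    intro a b k hk
    apply orderOf_dvd_of_pow_eq_one
    set n := orderOf (σ b) with hn
    have hdk : (d ^ k) ^ n = 1 := by
      calc (d ^ k) ^ n = (d ^ k) ^ (n : ℤ) := (zpow_natCast _ n).symm
        _ = d ^ (k * n) := (zpow_mul d k n).symm
        _ = (d ^ (n : ℤ)) ^ k := by rw [mul_comm, zpow_mul]
        _ = 1 := by rw [zpow_natCast, hdord b, one_zpow]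
    rw [hk, ((hcd b).zpow_right k).mul_pow, pow_orderOf_eq_one (σ b), one_mul, hdk]
  obtain ⟨g, hg, hgx⟩ := htr x y
  obtain ⟨k, hk⟩ := hP g hg x
  rw [hgx] at hk
  have hk' : σ x = σ y * d ^ (-k) := by
    rw [hk, mul_assoc, ← zpow_add, add_neg_cancel, zpow_zero, mul_one]
  exact Nat.dvd_antisymm (key x y (-k) hk') (key y x k hk)
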